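/- The system of generalized Sylvester equations A_i X_{i'} M_i - N_i X_{i''} B_i = C_i (i = 1,…,s) over a field has a solution if and only if there exist invertible matrices P_1,…,P_t, Q_1,…,Q_s, R_1,…,R_s satisfying, for each i: [[A_i,0],[0,B_i]]Q_i = R_i[[A_i,C_i],[0,B_i]], [[I,0],[0,M_i]]Q_i = P_{i'}[[I,0],[0,M_i]], and [[N_i,0],[0,I]]P_{i''} = R_i[[N_i,0],[0,I]]. -/

import Mathlib

open Matrix Module

set_option maxHeartbeats 1000000
set_option synthInstance.maxHeartbeats 400000

namespace GSRoth

section Abstract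
variable {K V : Type*} [Field K] [AddCommGroup V] [Module K V]

theorem finrank_map_add_finrank_inf_ker [FiniteDimensional K V]
    (f : V →ₗ[K] V) (U : Submodule K V) :
    finrank K (U.map f) + finrank K (LinearMap.ker f ⊓ U : Submodule K V)
      = finrank K U := by
  have h1 := LinearMap.finrank_range_add_finrank_ker (f.domRestrict U)
  rw [LinearMap.range_domRestrict, LinearMap.ker_domRestrict] at h1
  have h2 : (LinearMap.ker f).comap U.subtype
      = ((LinearMap.ker f ⊓ U : Submodule K V).comap U.subtype) := by
    ext z; simp [z.2]
  rw [h2, (Submodule.comapSubtypeEquivOfLe (inf_le_right :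
      LinearMap.ker f ⊓ U ≤ U)).finrank_eq] at h1
  exact h1

theorem finrank_eq_of_equiv_le [FiniteDimensional K V] (e : V ≃ₗ[K] V)
    {U0 U1 : Submodule K V}
    (h01 : U0.map (e : V →ₗ[K] V) ≤ U1) (h10 : U1.map (e.symm : V →ₗ[K] V) ≤ U0) :
    finrank K U0 = finrank K U1 := by
  have h1 : finrank K U0 ≤ finrank K U1 := by
    rw [← LinearEquiv.finrank_map_eq e U0]
    exact Submodule.finrank_mono h01
  have h2 : finrank K U1 ≤ finrank K U0 := by
    rw [← LinearEquiv.finrank_map_eq e.symm U1]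
    exact Submodule.finrank_mono h10
  omega

theorem conj_helper {m n : Type*} [Fintype m] [Fintype n] [DecidableEq m] [DecidableEq n]
    {R : Type*} [CommRing R]
    {X Y : Matrix m n R} {U U' : Matrix n n R} {V V' : Matrix m m R}
    (h : X * U = V * Y) (hV : V' * V = 1) (hU : U * U' = 1) :
    Y * U' = V' * X :=
  calc Y * U' = ((V' * V) * Y) * U' := by rw [hV, Matrix.one_mul]
  _ = (V' * (X * U)) * U' := by rw [Matrix.mul_assoc V' V Y, ← h]
  _ = ((V' * X) * U) * U' := by rw [← Matrix.mul_assoc V' X U]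
  _ = (V' * X) * (U * U') := by rw [Matrix.mul_assoc]
  _ = V' * X := by rw [hU, Matrix.mul_one]

end Abstract

variable {F : Type*} [Field F] {s t : ℕ}
    {a b : Fin s → ℕ} {p q : Fin t → ℕ} {f g : Fin s → Fin t}

variable (F a b p q f g) in
/-- The ambient space of tuples `(P, Q, R)`. -/
abbrev W : Type _ :=
  (∀ j : Fin t, Matrix (Fin (p j) ⊕ Fin (q j)) (Fin (p j) ⊕ Fin (q j)) F) ×
  (∀ i : Fin s, Matrix (Fin (p (f i)) ⊕ Fin (b i)) (Fin (p (f i)) ⊕ Fin (b i)) F) ×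
  (∀ i : Fin s, Matrix (Fin (a i) ⊕ Fin (q (g i))) (Fin (a i) ⊕ Fin (q (g i))) F)

/-- Right multiplication by a fixed tuple, as a linear map. -/
def rmul (u : W F a b p q f g) : W F a b p q f g →ₗ[F] W F a b p q f g where
  toFun z := (fun j => z.1 j * u.1 j, fun i => z.2.1 i * u.2.1 i, fun i => z.2.2 i * u.2.2 i)
  map_add' x y := by
    refine Prod.ext ?_ (Prod.ext ?_ ?_) <;> funext j <;> simp [Matrix.add_mul]
  map_smul' c x := by
    refine Prod.ext ?_ (Prod.ext ?_ ?_) <;> funext j <;> simp [Matrix.smul_mul]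

@[simp] theorem rmul_apply (u z : W F a b p q f g) :
    rmul u z = (fun j => z.1 j * u.1 j, fun i => z.2.1 i * u.2.1 i, fun i => z.2.2 i * u.2.2 i) :=
  rfl

variable (A : ∀ i : Fin s, Matrix (Fin (a i)) (Fin (p (f i))) F)
    (M : ∀ i : Fin s, Matrix (Fin (q (f i))) (Fin (b i)) F)
    (N : ∀ i : Fin s, Matrix (Fin (a i)) (Fin (p (g i))) F)
    (B : ∀ i : Fin s, Matrix (Fin (q (g i))) (Fin (b i)) F)
    (C : ∀ i : Fin s, Matrix (Fin (a i)) (Fin (b i)) F)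

/-- The solution space of the linear system of "intertwining" equations, with
right-hand side blocks `C i`. -/
def V : Submodule F (W F a b p q f g) where
  carrier := {z | ∀ i,
    fromBlocks (A i) 0 0 (B i) * z.2.1 i = z.2.2 i * fromBlocks (A i) (C i) 0 (B i) ∧
    fromBlocks (1 : Matrix (Fin (p (f i))) (Fin (p (f i))) F) 0 0 (M i) * z.2.1 i = z.1 (f i) * fromBlocks (1 : Matrix (Fin (p (f i))) (Fin (p (f i))) F) 0 0 (M i) ∧
    fromBlocks (N i) 0 0 (1 : Matrix (Fin (q (g i))) (Fin (q (g i))) F) * z.1 (g i) = z.2.2 i * fromBlocks (N i) 0 0 (1 : Matrix (Fin (q (g i))) (Fin (q (g i))) F)}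
  zero_mem' := by intro i; simp
  add_mem' := by
    intro x y hx hy i
    obtain ⟨h1, h2, h3⟩ := hx i
    obtain ⟨k1, k2, k3⟩ := hy i
    refine ⟨?_, ?_, ?_⟩ <;>
      simp [Matrix.mul_add, Matrix.add_mul, h1, h2, h3, k1, k2, k3]
  smul_mem' := by
    intro c x hx i
    obtain ⟨h1, h2, h3⟩ := hx i
    refine ⟨?_, ?_, ?_⟩ <;>
      simp [Matrix.mul_smul, Matrix.smul_mul, h1, h2, h3]

theorem mem_V {z : W F a b p q f g} :
    z ∈ V A M N B C ↔ ∀ i,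
    fromBlocks (A i) 0 0 (B i) * z.2.1 i = z.2.2 i * fromBlocks (A i) (C i) 0 (B i) ∧
    fromBlocks (1 : Matrix (Fin (p (f i))) (Fin (p (f i))) F) 0 0 (M i) * z.2.1 i = z.1 (f i) * fromBlocks (1 : Matrix (Fin (p (f i))) (Fin (p (f i))) F) 0 0 (M i) ∧
    fromBlocks (N i) 0 0 (1 : Matrix (Fin (q (g i))) (Fin (q (g i))) F) * z.1 (g i) = z.2.2 i * fromBlocks (N i) 0 0 (1 : Matrix (Fin (q (g i))) (Fin (q (g i))) F) :=
  Iff.rfl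

/-- The corner projection tuple. -/
def cornerW : W F a b p q f g :=
  (fun _ => fromBlocks 1 0 0 0, fun _ => fromBlocks 1 0 0 0, fun _ => fromBlocks 1 0 0 0)

theorem main_backward
    (P : ∀ j : Fin t, Matrix (Fin (p j) ⊕ Fin (q j)) (Fin (p j) ⊕ Fin (q j)) F)
    (Q : ∀ i : Fin s, Matrix (Fin (p (f i)) ⊕ Fin (b i)) (Fin (p (f i)) ⊕ Fin (b i)) F)
    (R : ∀ i : Fin s, Matrix (Fin (a i) ⊕ Fin (q (g i))) (Fin (a i) ⊕ Fin (q (g i))) F)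
    (hP : ∀ j, IsUnit (P j)) (hQ : ∀ i, IsUnit (Q i)) (hR : ∀ i, IsUnit (R i))
    (hG : (P, Q, R) ∈ V A M N B C) :
    ∃ X : ∀ j : Fin t, Matrix (Fin (p j)) (Fin (q j)) F,
      ∀ i, A i * X (f i) * M i - N i * X (g i) * B i = C i := by
  classical
  haveI : FiniteDimensional F (W F a b p q f g) := inferInstance
  have hPP' : ∀ j, P j * (P j)⁻¹ = 1 := fun j =>
    Matrix.mul_nonsing_inv _ ((Matrix.isUnit_iff_isUnit_det _).mp (hP j))
  have hP'P : ∀ j, (P j)⁻¹ * P j = 1 := fun j =>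
    Matrix.nonsing_inv_mul _ ((Matrix.isUnit_iff_isUnit_det _).mp (hP j))
  have hQQ' : ∀ i, Q i * (Q i)⁻¹ = 1 := fun i =>
    Matrix.mul_nonsing_inv _ ((Matrix.isUnit_iff_isUnit_det _).mp (hQ i))
  have hQ'Q : ∀ i, (Q i)⁻¹ * Q i = 1 := fun i =>
    Matrix.nonsing_inv_mul _ ((Matrix.isUnit_iff_isUnit_det _).mp (hQ i))
  have hRR' : ∀ i, R i * (R i)⁻¹ = 1 := fun i =>
    Matrix.mul_nonsing_inv _ ((Matrix.isUnit_iff_isUnit_det _).mp (hR i))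
  have hR'R : ∀ i, (R i)⁻¹ * R i = 1 := fun i =>
    Matrix.nonsing_inv_mul _ ((Matrix.isUnit_iff_isUnit_det _).mp (hR i))
  -- the two subspaces
  set V0 : Submodule F (W F a b p q f g) := V A M N B (fun _ => 0) with hV0def
  set V1 : Submodule F (W F a b p q f g) := V A M N B C with hV1def
  -- the linear equivalence given by right multiplication by (P,Q,R)
  set e : W F a b p q f g ≃ₗ[F] W F a b p q f g :=
    LinearEquiv.ofLinear (rmul (P, Q, R))
      (rmul (fun j => (P j)⁻¹, fun i => (Q i)⁻¹, fun i => (R i)⁻¹))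
      (by
        apply LinearMap.ext; intro z
        refine Prod.ext ?_ (Prod.ext ?_ ?_) <;> funext j <;>
          simp [Matrix.mul_assoc, hP'P, hQ'Q, hR'R])
      (by
        apply LinearMap.ext; intro z
        refine Prod.ext ?_ (Prod.ext ?_ ?_) <;> funext j <;>
          simp [Matrix.mul_assoc, hPP', hQQ', hRR'])
    with hedef
  have hmape : V0.map (e : W F a b p q f g →ₗ[F] W F a b p q f g) ≤ V1 := by
    rintro x hx
    obtain ⟨z, hz, rfl⟩ := hx
    rw [hV1def, mem_V]
    intro i
    obtain ⟨z1, z2, z3⟩ := hz i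
    obtain ⟨g1, g2, g3⟩ := hG i
    simp only at z1
    refine ⟨?_, ?_, ?_⟩
    · show fromBlocks (A i) 0 0 (B i) * (z.2.1 i * Q i)
        = (z.2.2 i * R i) * fromBlocks (A i) (C i) 0 (B i)
      rw [← Matrix.mul_assoc, z1, Matrix.mul_assoc, g1, ← Matrix.mul_assoc]
    · show fromBlocks (1 : Matrix (Fin (p (f i))) (Fin (p (f i))) F) 0 0 (M i) * (z.2.1 i * Q i)
        = (z.1 (f i) * P (f i)) * fromBlocks (1 : Matrix (Fin (p (f i))) (Fin (p (f i))) F) 0 0 (M i)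
      rw [← Matrix.mul_assoc, z2, Matrix.mul_assoc, g2, ← Matrix.mul_assoc]
    · show fromBlocks (N i) 0 0 (1 : Matrix (Fin (q (g i))) (Fin (q (g i))) F) * (z.1 (g i) * P (g i))
        = (z.2.2 i * R i) * fromBlocks (N i) 0 0 (1 : Matrix (Fin (q (g i))) (Fin (q (g i))) F)
      rw [← Matrix.mul_assoc, z3, Matrix.mul_assoc, g3, ← Matrix.mul_assoc]
  have inv1 : ∀ i, fromBlocks (A i) (C i) 0 (B i) * (Q i)⁻¹
      = (R i)⁻¹ * fromBlocks (A i) 0 0 (B i) := fun i =>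
    conj_helper (hG i).1 (hR'R i) (hQQ' i)
  have inv2 : ∀ i, fromBlocks (1 : Matrix (Fin (p (f i))) (Fin (p (f i))) F) 0 0 (M i) * (Q i)⁻¹
      = (P (f i))⁻¹ * fromBlocks (1 : Matrix (Fin (p (f i))) (Fin (p (f i))) F) 0 0 (M i) := fun i =>
    conj_helper (hG i).2.1 (hP'P (f i)) (hQQ' i)
  have inv3 : ∀ i, fromBlocks (N i) 0 0 (1 : Matrix (Fin (q (g i))) (Fin (q (g i))) F) * (P (g i))⁻¹
      = (R i)⁻¹ * fromBlocks (N i) 0 0 (1 : Matrix (Fin (q (g i))) (Fin (q (g i))) F) := fun i =>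
    conj_helper (hG i).2.2 (hR'R i) (hPP' (g i))
  have hmape' : V1.map (e.symm : W F a b p q f g →ₗ[F] W F a b p q f g) ≤ V0 := by
    rintro x hx
    obtain ⟨z, hz, rfl⟩ := hx
    rw [hV0def, mem_V]
    intro i
    obtain ⟨z1, z2, z3⟩ := hz i
    refine ⟨?_, ?_, ?_⟩
    · show fromBlocks (A i) 0 0 (B i) * (z.2.1 i * (Q i)⁻¹)
        = (z.2.2 i * (R i)⁻¹) * fromBlocks (A i) 0 0 (B i)
      rw [← Matrix.mul_assoc, z1, Matrix.mul_assoc, inv1 i, ← Matrix.mul_assoc]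
    · show fromBlocks (1 : Matrix (Fin (p (f i))) (Fin (p (f i))) F) 0 0 (M i) * (z.2.1 i * (Q i)⁻¹)
        = (z.1 (f i) * (P (f i))⁻¹) * fromBlocks (1 : Matrix (Fin (p (f i))) (Fin (p (f i))) F) 0 0 (M i)
      rw [← Matrix.mul_assoc, z2, Matrix.mul_assoc, inv2 i, ← Matrix.mul_assoc]
    · show fromBlocks (N i) 0 0 (1 : Matrix (Fin (q (g i))) (Fin (q (g i))) F) * (z.1 (g i) * (P (g i))⁻¹)
        = (z.2.2 i * (R i)⁻¹) * fromBlocks (N i) 0 0 (1 : Matrix (Fin (q (g i))) (Fin (q (g i))) F)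
      rw [← Matrix.mul_assoc, z3, Matrix.mul_assoc, inv3 i, ← Matrix.mul_assoc]
  have hfr01 : finrank F V0 = finrank F V1 := finrank_eq_of_equiv_le e hmape hmape'
  -- the corner projection
  set ζ : W F a b p q f g →ₗ[F] W F a b p q f g := rmul (cornerW) with hζdef
  have hkereq : LinearMap.ker ζ ⊓ V0 = LinearMap.ker ζ ⊓ V1 := by
    ext z
    simp only [Submodule.mem_inf, LinearMap.mem_ker]
    have key : ζ z = 0 → ∀ i, z.2.2 i * fromBlocks (A i) (C i) 0 (B i)
        = z.2.2 i * fromBlocks (A i) 0 0 (B i) := by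
      intro hk i
      have hc : z.2.2 i * (fromBlocks 1 0 0 0 :
          Matrix (Fin (a i) ⊕ Fin (q (g i))) (Fin (a i) ⊕ Fin (q (g i))) F) = 0 := by
        have := congrArg (fun w => w.2.2 i) hk
        simpa [hζdef, cornerW] using this
      have hsplit : fromBlocks (A i) (C i) 0 (B i)
          = fromBlocks (A i) 0 0 (B i)
            + (fromBlocks 1 0 0 0 :
                Matrix (Fin (a i) ⊕ Fin (q (g i))) (Fin (a i) ⊕ Fin (q (g i))) F)
              * (fromBlocks 0 (C i) 0 0 :
                Matrix (Fin (a i) ⊕ Fin (q (g i))) (Fin (p (f i)) ⊕ Fin (b i)) F) := by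
        simp [fromBlocks_multiply, Matrix.fromBlocks_add]
      rw [hsplit, Matrix.mul_add, ← Matrix.mul_assoc, hc, Matrix.zero_mul, add_zero]
    constructor
    · rintro ⟨hk, hv⟩
      refine ⟨hk, fun i => ?_⟩
      obtain ⟨h1, h2, h3⟩ := hv i
      simp only at h1
      exact ⟨by rw [key hk i]; exact h1, h2, h3⟩
    · rintro ⟨hk, hv⟩
      refine ⟨hk, fun i => ?_⟩
      obtain ⟨h1, h2, h3⟩ := hv i
      refine ⟨?_, h2, h3⟩
      show fromBlocks (A i) 0 0 (B i) * z.2.1 i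
        = z.2.2 i * fromBlocks (A i) 0 0 (B i)
      rw [← key hk i]
      exact h1
  have hfrmap : finrank F (V0.map ζ) = finrank F (V1.map ζ) := by
    have h0 := finrank_map_add_finrank_inf_ker ζ V0
    have h1 := finrank_map_add_finrank_inf_ker ζ V1
    rw [hkereq] at h0
    omega
  have hmaple : V1.map ζ ≤ V0.map ζ := by
    rintro x hx
    obtain ⟨z, hz, rfl⟩ := hx
    refine ⟨ζ z, ?_, ?_⟩
    · intro i
      obtain ⟨z1, z2, z3⟩ := hz i
      have fact1 : fromBlocks (A i) (C i) 0 (B i) *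
          (fromBlocks 1 0 0 0 :
            Matrix (Fin (p (f i)) ⊕ Fin (b i)) (Fin (p (f i)) ⊕ Fin (b i)) F)
          = (fromBlocks 1 0 0 0 :
            Matrix (Fin (a i) ⊕ Fin (q (g i))) (Fin (a i) ⊕ Fin (q (g i))) F)
            * fromBlocks (A i) 0 0 (B i) := by
        simp [fromBlocks_multiply]
      have fact2 : fromBlocks (1 : Matrix (Fin (p (f i))) (Fin (p (f i))) F) 0 0 (M i) *
          (fromBlocks 1 0 0 0 :
            Matrix (Fin (p (f i)) ⊕ Fin (b i)) (Fin (p (f i)) ⊕ Fin (b i)) F)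
          = (fromBlocks 1 0 0 0 :
            Matrix (Fin (p (f i)) ⊕ Fin (q (f i))) (Fin (p (f i)) ⊕ Fin (q (f i))) F)
            * fromBlocks (1 : Matrix (Fin (p (f i))) (Fin (p (f i))) F) 0 0 (M i) := by
        simp [fromBlocks_multiply]
      have fact3 : fromBlocks (N i) 0 0 (1 : Matrix (Fin (q (g i))) (Fin (q (g i))) F) *
          (fromBlocks 1 0 0 0 :
            Matrix (Fin (p (g i)) ⊕ Fin (q (g i))) (Fin (p (g i)) ⊕ Fin (q (g i))) F)
          = (fromBlocks 1 0 0 0 :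
            Matrix (Fin (a i) ⊕ Fin (q (g i))) (Fin (a i) ⊕ Fin (q (g i))) F)
            * fromBlocks (N i) 0 0 (1 : Matrix (Fin (q (g i))) (Fin (q (g i))) F) := by
        simp [fromBlocks_multiply]
      refine ⟨?_, ?_, ?_⟩
      · show fromBlocks (A i) 0 0 (B i) * (z.2.1 i * fromBlocks 1 0 0 0)
          = (z.2.2 i * fromBlocks 1 0 0 0) * fromBlocks (A i) 0 0 (B i)
        rw [← Matrix.mul_assoc, z1, Matrix.mul_assoc, fact1, ← Matrix.mul_assoc]
      · show fromBlocks (1 : Matrix (Fin (p (f i))) (Fin (p (f i))) F) 0 0 (M i) * (z.2.1 i * fromBlocks 1 0 0 0)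
          = (z.1 (f i) * fromBlocks 1 0 0 0) * fromBlocks (1 : Matrix (Fin (p (f i))) (Fin (p (f i))) F) 0 0 (M i)
        rw [← Matrix.mul_assoc, z2, Matrix.mul_assoc, fact2, ← Matrix.mul_assoc]
      · show fromBlocks (N i) 0 0 (1 : Matrix (Fin (q (g i))) (Fin (q (g i))) F) * (z.1 (g i) * fromBlocks 1 0 0 0)
          = (z.2.2 i * fromBlocks 1 0 0 0) * fromBlocks (N i) 0 0 (1 : Matrix (Fin (q (g i))) (Fin (q (g i))) F)
        rw [← Matrix.mul_assoc, z3, Matrix.mul_assoc, fact3, ← Matrix.mul_assoc]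
    · refine Prod.ext ?_ (Prod.ext ?_ ?_) <;> funext j <;>
        simp [hζdef, cornerW, Matrix.mul_assoc, fromBlocks_multiply]
  have hmapeq : V1.map ζ = V0.map ζ :=
    Submodule.eq_of_le_of_finrank_le hmaple (le_of_eq hfrmap)
  -- the identity tuple
  have hidV0 : ((fun _ => 1, fun _ => 1, fun _ => 1) : W F a b p q f g) ∈ V0 := by
    intro i
    refine ⟨?_, ?_, ?_⟩ <;> simp
  have : ζ (fun _ => 1, fun _ => 1, fun _ => 1) ∈ V1.map ζ := by
    rw [hmapeq]
    exact ⟨_, hidV0, rfl⟩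
  obtain ⟨z, hzV1, hzζ⟩ := this
  -- extraction of the solution from the corner-normalized element of `V1`
  refine ⟨fun j => (z.1 j).toBlocks₁₂, fun i => ?_⟩
  have hr11 : (z.2.2 i).toBlocks₁₁ = 1 := by
    have h : z.2.2 i * (fromBlocks 1 0 0 0 :
        Matrix (Fin (a i) ⊕ Fin (q (g i))) (Fin (a i) ⊕ Fin (q (g i))) F)
        = fromBlocks 1 0 0 0 := by
      have := congrArg (fun w => w.2.2 i) hzζ
      simpa [hζdef, cornerW] using this
    rw [← fromBlocks_toBlocks (z.2.2 i), fromBlocks_multiply] at h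
    have h11 := congrArg Matrix.toBlocks₁₁ h
    simpa using h11
  obtain ⟨e1, e2, e3⟩ := hzV1 i
  have he2 : (z.2.1 i).toBlocks₁₂ = (z.1 (f i)).toBlocks₁₂ * M i := by
    have h := e2
    rw [← fromBlocks_toBlocks (z.2.1 i), ← fromBlocks_toBlocks (z.1 (f i)),
      fromBlocks_multiply, fromBlocks_multiply] at h
    have h12 := congrArg Matrix.toBlocks₁₂ h
    simpa using h12
  have he3 : N i * (z.1 (g i)).toBlocks₁₂ = (z.2.2 i).toBlocks₁₂ := by
    have h := e3
    rw [← fromBlocks_toBlocks (z.2.2 i), ← fromBlocks_toBlocks (z.1 (g i)),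
      fromBlocks_multiply, fromBlocks_multiply] at h
    have h12 := congrArg Matrix.toBlocks₁₂ h
    simpa using h12
  have he1 : A i * (z.2.1 i).toBlocks₁₂
      = (z.2.2 i).toBlocks₁₁ * C i + (z.2.2 i).toBlocks₁₂ * B i := by
    have h := e1
    rw [← fromBlocks_toBlocks (z.2.1 i), ← fromBlocks_toBlocks (z.2.2 i),
      fromBlocks_multiply, fromBlocks_multiply] at h
    have h12 := congrArg Matrix.toBlocks₁₂ h
    simpa using h12
  rw [hr11, Matrix.one_mul, he2, ← he3] at he1
  rw [Matrix.mul_assoc, he1]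
  exact add_sub_cancel_right _ _



theorem isUnit_fromBlocks_triangular {m n : Type*} [DecidableEq m] [DecidableEq n]
    [Fintype m] [Fintype n] {R : Type*} [CommRing R] (X : Matrix m n R) :
    IsUnit (fromBlocks (1 : Matrix m m R) X 0 (1 : Matrix n n R)) := by
  have h1 : fromBlocks (1 : Matrix m m R) X 0 (1 : Matrix n n R)
      * fromBlocks 1 (-X) 0 1 = 1 := by
    simp [fromBlocks_multiply, Matrix.fromBlocks_one]
  have h2 : fromBlocks (1 : Matrix m m R) (-X) 0 (1 : Matrix n n R)
      * fromBlocks 1 X 0 1 = 1 := by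
    simp [fromBlocks_multiply, Matrix.fromBlocks_one]
  exact ⟨⟨_, _, h1, h2⟩, rfl⟩

end GSRoth

open Matrix in
/-- Theorem 3 of the paper (identity case): the system
`A_i X_{f i} M_i - N_i X_{g i} B_i = C_i` is solvable iff there exist invertible
matrices `P_1,…,P_t, Q_1,…,Q_s, R_1,…,R_s` satisfying the `3s` block equalities. -/
theorem generalized_sylvester_roth {F : Type*} [Field F] {s t : ℕ}
    (a b : Fin s → ℕ) (p q : Fin t → ℕ) (f g : Fin s → Fin t)
    (A : ∀ i : Fin s, Matrix (Fin (a i)) (Fin (p (f i))) F)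
    (M : ∀ i : Fin s, Matrix (Fin (q (f i))) (Fin (b i)) F)
    (N : ∀ i : Fin s, Matrix (Fin (a i)) (Fin (p (g i))) F)
    (B : ∀ i : Fin s, Matrix (Fin (q (g i))) (Fin (b i)) F)
    (C : ∀ i : Fin s, Matrix (Fin (a i)) (Fin (b i)) F) :
    (∃ X : ∀ j : Fin t, Matrix (Fin (p j)) (Fin (q j)) F,
        ∀ i, A i * X (f i) * M i - N i * X (g i) * B i = C i) ↔
      ∃ (P : ∀ j : Fin t, Matrix (Fin (p j) ⊕ Fin (q j)) (Fin (p j) ⊕ Fin (q j)) F)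
        (Q : ∀ i : Fin s, Matrix (Fin (p (f i)) ⊕ Fin (b i)) (Fin (p (f i)) ⊕ Fin (b i)) F)
        (R : ∀ i : Fin s, Matrix (Fin (a i) ⊕ Fin (q (g i))) (Fin (a i) ⊕ Fin (q (g i))) F),
        (∀ j, IsUnit (P j)) ∧ (∀ i, IsUnit (Q i)) ∧ (∀ i, IsUnit (R i)) ∧
        ∀ i,
          fromBlocks (A i) 0 0 (B i) * Q i = R i * fromBlocks (A i) (C i) 0 (B i) ∧
          fromBlocks (1 : Matrix (Fin (p (f i))) (Fin (p (f i))) F) 0 0 (M i) * Q i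
            = P (f i) * fromBlocks 1 0 0 (M i) ∧
          fromBlocks (N i) 0 0 (1 : Matrix (Fin (q (g i))) (Fin (q (g i))) F) * P (g i)
            = R i * fromBlocks (N i) 0 0 1 := by
  constructor
  · rintro ⟨X, hX⟩
    refine ⟨fun j => fromBlocks 1 (X j) 0 1,
      fun i => fromBlocks 1 (X (f i) * M i) 0 1,
      fun i => fromBlocks 1 (N i * X (g i)) 0 1,
      fun j => GSRoth.isUnit_fromBlocks_triangular _,
      fun i => GSRoth.isUnit_fromBlocks_triangular _,
      fun i => GSRoth.isUnit_fromBlocks_triangular _,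
      fun i => ?_⟩
    have h' : A i * (X (f i) * M i) = C i + N i * (X (g i) * B i) := by
      rw [← Matrix.mul_assoc, ← Matrix.mul_assoc]
      exact sub_eq_iff_eq_add.mp (hX i)
    refine ⟨?_, ?_, ?_⟩
    · simp [fromBlocks_multiply, Matrix.mul_assoc, h']
    · show _ = @HMul.hMul (Matrix (Fin (p (f i)) ⊕ Fin (q (f i))) (Fin (p (f i)) ⊕ Fin (q (f i))) F)
        (Matrix (Fin (p (f i)) ⊕ Fin (q (f i))) (Fin (p (f i)) ⊕ Fin (b i)) F)
        (Matrix (Fin (p (f i)) ⊕ Fin (q (f i))) (Fin (p (f i)) ⊕ Fin (b i)) F) _ _ _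
      simp [fromBlocks_multiply]
    · show _ = @HMul.hMul (Matrix (Fin (a i) ⊕ Fin (q (g i))) (Fin (a i) ⊕ Fin (q (g i))) F)
        (Matrix (Fin (a i) ⊕ Fin (q (g i))) (Fin (p (g i)) ⊕ Fin (q (g i))) F)
        (Matrix (Fin (a i) ⊕ Fin (q (g i))) (Fin (p (g i)) ⊕ Fin (q (g i))) F) _ _ _
      simp [fromBlocks_multiply]
  · rintro ⟨P, Q, R, hP, hQ, hR, h⟩
    exact GSRoth.main_backward A M N B C P Q R hP hQ hR h
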